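/- Monotonicity of transfer entropy in memory length: fix a horizon T and suppose for each t the conditional distribution of U_t given (X_t, U_{t-n}, ..., U_{t-1}) determines U_t, i.e., U_t is conditionally independent of all other past variables given (X_t, U_{t-n}^{t-1}). Then for every n' ≥ n, the transfer entropy I_{0,n'}(X^T → U^T) = ∑_{t=1}^T I(X_t; U_t | U_{t-n'}^{t-1}) is nonincreasing in n': I_{0,n'}(X^T → U^T) ≥ I_{0,n'+1}(X^T → U^T). -/

import Mathlib

open Finset

/-- Probability of the event `{ω | f ω = a ∧ g ω = b}` under pmf `μ`. -/
noncomputable def jointProb {Ω A B : Type*} [Fintype Ω] [DecidableEq A] [DecidableEq B]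
    (μ : Ω → ℝ) (f : Ω → A) (g : Ω → B) (a : A) (b : B) : ℝ :=
  ∑ ω, if f ω = a ∧ g ω = b then μ ω else 0

/-- Conditional Shannon entropy `H(f | g)` (natural logarithm) of finite random
variables `f, g` defined on a finite probability space `(Ω, μ)`:
`H(f|g) = ∑_{a,b} P(f=a, g=b) log (P(g=b) / P(f=a, g=b))`. -/
noncomputable def condEnt {Ω A B : Type*} [Fintype Ω] [Fintype A] [Fintype B]
    [DecidableEq A] [DecidableEq B]
    (μ : Ω → ℝ) (f : Ω → A) (g : Ω → B) : ℝ :=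
  ∑ a, ∑ b,
    jointProb μ f g a b *
      Real.log ((∑ ω, if g ω = b then μ ω else 0) / jointProb μ f g a b)

/-- Conditional mutual information `I(f ; g | h) = H(g | h) - H(g | (f, h))`. -/
noncomputable def condMI {Ω A B C : Type*} [Fintype Ω] [Fintype A] [Fintype B] [Fintype C]
    [DecidableEq A] [DecidableEq B] [DecidableEq C]
    (μ : Ω → ℝ) (f : Ω → A) (g : Ω → B) (h : Ω → C) : ℝ :=
  condEnt μ g h - condEnt μ g (fun ω => (f ω, h ω))

/-- `f` and `g` are conditionally independent given `h` under the pmf `μ`: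
`P(f=a, g=b, h=c) ⬝ P(h=c) = P(f=a, h=c) ⬝ P(g=b, h=c)` for all `a, b, c`. -/
def CondIndep {Ω A B C : Type*} [Fintype Ω] [DecidableEq A] [DecidableEq B] [DecidableEq C]
    (μ : Ω → ℝ) (f : Ω → A) (g : Ω → B) (h : Ω → C) : Prop :=
  ∀ a b c,
    (∑ ω, if f ω = a ∧ g ω = b ∧ h ω = c then μ ω else 0) *
      (∑ ω, if h ω = c then μ ω else 0) =
    (∑ ω, if f ω = a ∧ h ω = c then μ ω else 0) *
      (∑ ω, if g ω = b ∧ h ω = c then μ ω else 0)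

/-- The window `U_{t-n}^{t-1}` of the control trajectory `u`, represented as a
partially-defined trajectory: `some (u s)` for `t-n ≤ s ≤ t-1`, `none` otherwise. -/
def ctrlWindow {T : ℕ} {𝒰 : Type*} (n : ℕ) (t : Fin T) (u : Fin T → 𝒰) : Fin T → Option 𝒰 :=
  fun s => if s.val < t.val ∧ t.val ≤ s.val + n then some (u s) else none

set_option linter.unusedSectionVars false
set_option linter.unusedVariables false

section Helpers
variable {Ω A B C : Type*} [Fintype Ω] [Fintype A] [Fintype B] [Fintype C]
  [DecidableEq A] [DecidableEq B] [DecidableEq C]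

lemma sum_if_nonneg {μ : Ω → ℝ} (hμ0 : ∀ ω, 0 ≤ μ ω) (P : Ω → Prop) [DecidablePred P] :
    0 ≤ ∑ ω, if P ω then μ ω else 0 := by
  apply Finset.sum_nonneg; intro ω _
  split_ifs
  · exact hμ0 ω
  · exact le_refl 0

lemma sum_if_mono {μ : Ω → ℝ} (hμ0 : ∀ ω, 0 ≤ μ ω) {P Q : Ω → Prop}
    [DecidablePred P] [DecidablePred Q] (hPQ : ∀ ω, P ω → Q ω) :
    (∑ ω, if P ω then μ ω else 0) ≤ ∑ ω, if Q ω then μ ω else 0 := by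
  apply Finset.sum_le_sum; intro ω _
  by_cases h : P ω
  · simp [h, hPQ ω h]
  · simp only [h, if_false]
    split_ifs
    · exact hμ0 ω
    · exact le_refl 0

lemma le_sum_if {μ : Ω → ℝ} (hμ0 : ∀ ω, 0 ≤ μ ω) {P : Ω → Prop} [DecidablePred P]
    {ω₀ : Ω} (h : P ω₀) : μ ω₀ ≤ ∑ ω, if P ω then μ ω else 0 := by
  have := Finset.single_le_sum (f := fun ω => if P ω then μ ω else 0)
    (fun ω _ => by split_ifs; exacts [hμ0 ω, le_refl 0]) (Finset.mem_univ ω₀)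
  simpa [h] using this

lemma sum_collapse1 (g : Ω → B) (F : Ω → B → ℝ) :
    ∑ b, ∑ ω, (if g ω = b then F ω b else 0) = ∑ ω, F ω (g ω) := by
  rw [Finset.sum_comm]
  apply Finset.sum_congr rfl; intro ω _
  simp [Finset.sum_ite_eq]

lemma sum_collapse2 (f : Ω → A) (g : Ω → B) (F : Ω → A → B → ℝ) :
    ∑ a, ∑ b, ∑ ω, (if f ω = a ∧ g ω = b then F ω a b else 0) = ∑ ω, F ω (f ω) (g ω) := by
  have h1 : ∀ a, ∑ b, ∑ ω, (if f ω = a ∧ g ω = b then F ω a b else 0)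
      = ∑ ω, (if f ω = a then F ω a (g ω) else 0) := by
    intro a
    have := sum_collapse1 g (fun ω b => if f ω = a then F ω a b else 0)
    rw [← this]
    apply Finset.sum_congr rfl; intro b _
    apply Finset.sum_congr rfl; intro ω _
    by_cases h : f ω = a <;> by_cases h' : g ω = b <;> simp [h, h']
  simp only [h1]
  rw [Finset.sum_comm]
  apply Finset.sum_congr rfl; intro ω _
  simp [Finset.sum_ite_eq]

lemma sum_fiber (ψ : B → C) (M : B → ℝ) (L : C → ℝ) :
    ∑ c, (∑ b, if ψ b = c then M b else 0) * L c = ∑ b, M b * L (ψ b) := by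
  have := sum_collapse1 (Ω := B) ψ (fun b c => M b * L c)
  rw [← this]
  apply Finset.sum_congr rfl; intro c _
  rw [Finset.sum_mul]
  apply Finset.sum_congr rfl; intro b _
  split_ifs <;> simp

lemma sum_fiber' (ψ : B → C) (M : B → ℝ) :
    ∑ c, ∑ b, (if ψ b = c then M b else 0) = ∑ b, M b :=
  sum_collapse1 (Ω := B) ψ (fun b _ => M b)

lemma key_pointwise {j p j' p' : ℝ} (hj : 0 ≤ j) (hjp : j ≤ p) (hjj' : j ≤ j')
    (hpp' : p ≤ p') (hj'p' : j' ≤ p') :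
    j * Real.log (p / j) + (j - j' * p / p') ≤ j * Real.log (p' / j') := by
  rcases eq_or_lt_of_le hj with h0 | h0
  · have hp : 0 ≤ p := hj.trans hjp
    have hj'0 : 0 ≤ j' := hj.trans hjj'
    have hp'0 : 0 ≤ p' := hp.trans hpp'
    have : 0 ≤ j' * p / p' := by positivity
    simp only [← h0]
    simp
    linarith
  · have hp : 0 < p := lt_of_lt_of_le h0 hjp
    have hj' : 0 < j' := lt_of_lt_of_le h0 hjj'
    have hp' : 0 < p' := lt_of_lt_of_le hp hpp'
    have hx : 0 < j' * p / (p' * j) := by positivity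
    have hlog := Real.log_le_sub_one_of_pos hx
    have e1 : Real.log (j' * p / (p' * j))
        = Real.log j' + Real.log p - (Real.log p' + Real.log j) := by
      rw [Real.log_div (by positivity) (by positivity), Real.log_mul hj'.ne' hp.ne',
        Real.log_mul hp'.ne' h0.ne']
    rw [e1] at hlog
    have h2 := mul_le_mul_of_nonneg_left hlog (le_of_lt h0)
    have h3 : j * (j' * p / (p' * j) - 1) = j' * p / p' - j := by
      field_simp
    rw [h3] at h2
    rw [Real.log_div hp.ne' h0.ne', Real.log_div hp'.ne' hj'.ne']
    nlinarith [h2]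

lemma abstract_A (J : A → B → ℝ) (P : B → ℝ) (ψ : B → C)
    (hJ0 : ∀ a b, 0 ≤ J a b) (hP0 : ∀ b, 0 ≤ P b) (hJP : ∀ a b, J a b ≤ P b) :
    ∑ a, ∑ b, J a b * Real.log (P b / J a b) ≤
    ∑ a, ∑ c, (∑ b, if ψ b = c then J a b else 0) *
      Real.log ((∑ b, if ψ b = c then P b else 0) / (∑ b, if ψ b = c then J a b else 0)) := by
  classical
  set J' : A → C → ℝ := fun a c => ∑ b, if ψ b = c then J a b else 0 with hJ'def
  set P' : C → ℝ := fun c => ∑ b, if ψ b = c then P b else 0 with hP'def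
  have hJ'0 : ∀ a c, 0 ≤ J' a c := by
    intro a c
    apply Finset.sum_nonneg; intro b _
    split_ifs
    · exact hJ0 a b
    · exact le_refl 0
  have hle1 : ∀ a b, J a b ≤ J' a (ψ b) := by
    intro a b
    apply Finset.single_le_sum (f := fun b' => if ψ b' = ψ b then J a b' else 0)
      (fun b' _ => by split_ifs; exacts [hJ0 a b', le_refl 0]) (Finset.mem_univ b)
      |>.trans_eq' (by simp)
  have hle2 : ∀ b, P b ≤ P' (ψ b) := by
    intro b
    apply Finset.single_le_sum (f := fun b' => if ψ b' = ψ b then P b' else 0)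
      (fun b' _ => by split_ifs; exacts [hP0 b', le_refl 0]) (Finset.mem_univ b)
      |>.trans_eq' (by simp)
  have hle3 : ∀ a c, J' a c ≤ P' c := by
    intro a c
    apply Finset.sum_le_sum; intro b _
    split_ifs
    · exact hJP a b
    · exact le_refl 0
  have key : ∀ a b, J a b * Real.log (P b / J a b) + (J a b - J' a (ψ b) * P b / P' (ψ b))
      ≤ J a b * Real.log (P' (ψ b) / J' a (ψ b)) :=
    fun a b => key_pointwise (hJ0 a b) (hJP a b) (hle1 a b) (hle2 b) (hle3 a (ψ b))
  have hcorr : ∀ a, 0 ≤ ∑ b, (J a b - J' a (ψ b) * P b / P' (ψ b)) := by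
    intro a
    rw [Finset.sum_sub_distrib]
    have e1 : ∑ b, J' a (ψ b) * P b / P' (ψ b) = ∑ c, P' c * (J' a c / P' c) := by
      calc ∑ b, J' a (ψ b) * P b / P' (ψ b)
          = ∑ b, P b * (J' a (ψ b) / P' (ψ b)) := by
            apply Finset.sum_congr rfl; intro b _; ring
        _ = ∑ c, (∑ b, if ψ b = c then P b else 0) * (J' a c / P' c) :=
            (sum_fiber ψ P (fun c => J' a c / P' c)).symm
        _ = ∑ c, P' c * (J' a c / P' c) := rfl
    have e2 : ∀ c, P' c * (J' a c / P' c) ≤ J' a c := by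
      intro c
      by_cases h : P' c = 0
      · simpa [h] using hJ'0 a c
      · rw [mul_comm, div_mul_cancel₀ _ h]
    have e3 : ∑ c, J' a c = ∑ b, J a b := sum_fiber' ψ (J a)
    have h4 := Finset.sum_le_sum (fun c (_ : c ∈ (univ : Finset C)) => e2 c)
    rw [e3] at h4
    linarith [e1 ▸ h4]
  apply Finset.sum_le_sum
  intro a _
  have h1 : ∑ b, (J a b * Real.log (P b / J a b) + (J a b - J' a (ψ b) * P b / P' (ψ b)))
      ≤ ∑ b, J a b * Real.log (P' (ψ b) / J' a (ψ b)) :=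
    Finset.sum_le_sum (fun b _ => key a b)
  rw [Finset.sum_add_distrib] at h1
  have := hcorr a
  calc ∑ b, J a b * Real.log (P b / J a b)
      ≤ ∑ b, J a b * Real.log (P' (ψ b) / J' a (ψ b)) := by linarith
    _ = ∑ c, J' a c * Real.log (P' c / J' a c) := by
        rw [← sum_fiber ψ (J a) (fun c => Real.log (P' c / J' a c))]
    _ = _ := rfl

/-- pointwise-ω representation of condEnt -/
lemma condEnt_eq_sum_omega (μ : Ω → ℝ) (f : Ω → A) (g : Ω → B) :
    condEnt μ f g = ∑ ω, μ ω *
      Real.log ((∑ ω', if g ω' = g ω then μ ω' else 0) / jointProb μ f g (f ω) (g ω)) := by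
  unfold condEnt
  have h : ∀ a b, jointProb μ f g a b *
      Real.log ((∑ ω, if g ω = b then μ ω else 0) / jointProb μ f g a b)
      = ∑ ω, (if f ω = a ∧ g ω = b then μ ω *
        Real.log ((∑ ω', if g ω' = b then μ ω' else 0) / jointProb μ f g a b) else 0) := by
    intro a b
    rw [jointProb, Finset.sum_mul]
    apply Finset.sum_congr rfl; intro ω _
    split_ifs <;> simp
  simp only [h]
  exact sum_collapse2 f g _

lemma P_fiber (μ : Ω → ℝ) (g : Ω → B) (ψ : B → C) (c : C) :
    (∑ ω, if ψ (g ω) = c then μ ω else 0)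
      = ∑ b, if ψ b = c then (∑ ω, if g ω = b then μ ω else 0) else 0 := by
  have := sum_collapse1 g (fun ω b => if ψ b = c then μ ω else 0)
  rw [← this]
  apply Finset.sum_congr rfl; intro b _
  split_ifs with h
  · rfl
  · apply Finset.sum_eq_zero; intro ω _; split_ifs <;> simp [h]

lemma J_fiber (μ : Ω → ℝ) (f : Ω → A) (g : Ω → B) (ψ : B → C) (a : A) (c : C) :
    jointProb μ f (fun ω => ψ (g ω)) a c
      = ∑ b, if ψ b = c then jointProb μ f g a b else 0 := by
  unfold jointProb
  have := sum_collapse1 g (fun ω b => if f ω = a ∧ ψ b = c then μ ω else 0)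
  rw [← this]
  apply Finset.sum_congr rfl; intro b _
  split_ifs with h
  · apply Finset.sum_congr rfl; intro ω _
    by_cases h1 : f ω = a <;> by_cases h2 : g ω = b <;> simp [h1, h2, h]
  · apply Finset.sum_eq_zero; intro ω _
    split_ifs with h1 h2 <;> first | rfl | exact absurd h2.2 h

/-- conditioning on a coarsening (a function of `g`) gives larger conditional entropy -/
lemma condEnt_le_comp (μ : Ω → ℝ) (hμ0 : ∀ ω, 0 ≤ μ ω) (f : Ω → A) (g : Ω → B) (ψ : B → C) :
    condEnt μ f g ≤ condEnt μ f (fun ω => ψ (g ω)) := by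
  have hform : condEnt μ f (fun ω => ψ (g ω))
      = ∑ a, ∑ c, (∑ b, if ψ b = c then jointProb μ f g a b else 0) *
        Real.log ((∑ b, if ψ b = c then (∑ ω, if g ω = b then μ ω else 0) else 0)
          / (∑ b, if ψ b = c then jointProb μ f g a b else 0)) := by
    unfold condEnt
    simp only [J_fiber μ f g ψ, P_fiber μ g ψ]
  rw [hform]
  exact abstract_A (jointProb μ f g) (fun b => ∑ ω, if g ω = b then μ ω else 0) ψ
    (fun a b => sum_if_nonneg hμ0 _)
    (fun b => sum_if_nonneg hμ0 _)
    (fun a b => sum_if_mono hμ0 (fun ω h => h.2))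

/-- conditional entropy only depends on the partition induced by the conditioning variable -/
lemma condEnt_congr (μ : Ω → ℝ) (f : Ω → A) (g : Ω → B) (g' : Ω → C)
    (hpart : ∀ ω₁ ω₂, g ω₁ = g ω₂ ↔ g' ω₁ = g' ω₂) :
    condEnt μ f g = condEnt μ f g' := by
  rw [condEnt_eq_sum_omega, condEnt_eq_sum_omega]
  apply Finset.sum_congr rfl; intro ω _
  have h1 : (∑ ω', if g ω' = g ω then μ ω' else 0)
      = (∑ ω', if g' ω' = g' ω then μ ω' else 0) :=
    Finset.sum_congr rfl fun ω' _ => if_congr (hpart ω' ω) rfl rfl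
  have h2 : jointProb μ f g (f ω) (g ω) = jointProb μ f g' (f ω) (g' ω) :=
    Finset.sum_congr rfl fun ω' _ => if_congr (and_congr Iff.rfl (hpart ω' ω)) rfl rfl
  rw [h1, h2]

lemma CondIndep.symm' {μ : Ω → ℝ} {f : Ω → A} {g : Ω → B} {h : Ω → C}
    (hCI : CondIndep μ f g h) : CondIndep μ g f h := by
  intro b a c
  have := hCI a b c
  have e : (∑ ω, if g ω = b ∧ f ω = a ∧ h ω = c then μ ω else 0)
      = (∑ ω, if f ω = a ∧ g ω = b ∧ h ω = c then μ ω else 0) :=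
    Finset.sum_congr rfl fun ω _ => if_congr (by tauto) rfl rfl
  rw [e, this]
  ring

lemma CondIndep.comp_right {μ : Ω → ℝ} {f : Ω → A} {g : Ω → B} {h : Ω → C}
    (hCI : CondIndep μ f g h) {D : Type*} [DecidableEq D] (σ : B × C → D) :
    CondIndep μ f (fun ω => σ (g ω, h ω)) h := by
  intro a d c
  have e1 : (∑ ω, if f ω = a ∧ σ (g ω, h ω) = d ∧ h ω = c then μ ω else 0)
      = ∑ b, if σ (b, c) = d then (∑ ω, if f ω = a ∧ g ω = b ∧ h ω = c then μ ω else 0) else 0 := by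
    have hc := sum_collapse1 g (fun ω b => if σ (b, c) = d ∧ f ω = a ∧ h ω = c then μ ω else 0)
    have eA : (∑ ω, if f ω = a ∧ σ (g ω, h ω) = d ∧ h ω = c then μ ω else 0)
        = ∑ ω, if σ (g ω, c) = d ∧ f ω = a ∧ h ω = c then μ ω else 0 := by
      apply Finset.sum_congr rfl; intro ω _
      apply if_congr _ rfl rfl
      constructor
      · rintro ⟨h1, h2, h3⟩; subst h3; exact ⟨h2, h1, rfl⟩
      · rintro ⟨h1, h2, h3⟩; subst h3; exact ⟨h2, h1, rfl⟩
    rw [eA, ← hc]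
    apply Finset.sum_congr rfl; intro b _
    by_cases hσ : σ (b, c) = d
    · simp only [hσ, if_true]
      apply Finset.sum_congr rfl; intro ω _
      by_cases hb : g ω = b <;> by_cases hf : f ω = a <;> by_cases hh : h ω = c <;>
        simp [hσ, hb, hf, hh]
    · simp only [hσ, if_false]
      apply Finset.sum_eq_zero; intro ω _
      simp [hσ]
  have e2 : (∑ ω, if σ (g ω, h ω) = d ∧ h ω = c then μ ω else 0)
      = ∑ b, if σ (b, c) = d then (∑ ω, if g ω = b ∧ h ω = c then μ ω else 0) else 0 := by
    have hc := sum_collapse1 g (fun ω b => if σ (b, c) = d ∧ h ω = c then μ ω else 0)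
    have eA : (∑ ω, if σ (g ω, h ω) = d ∧ h ω = c then μ ω else 0)
        = ∑ ω, if σ (g ω, c) = d ∧ h ω = c then μ ω else 0 := by
      apply Finset.sum_congr rfl; intro ω _
      apply if_congr _ rfl rfl
      constructor
      · rintro ⟨h1, h2⟩; subst h2; exact ⟨h1, rfl⟩
      · rintro ⟨h1, h2⟩; subst h2; exact ⟨h1, rfl⟩
    rw [eA, ← hc]
    apply Finset.sum_congr rfl; intro b _
    by_cases hσ : σ (b, c) = d
    · simp only [hσ, if_true]
      apply Finset.sum_congr rfl; intro ω _
      by_cases hb : g ω = b <;> by_cases hh : h ω = c <;> simp [hσ, hb, hh]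
    · simp only [hσ, if_false]
      apply Finset.sum_eq_zero; intro ω _
      simp [hσ]
  show (∑ ω, if f ω = a ∧ σ (g ω, h ω) = d ∧ h ω = c then μ ω else 0) *
      (∑ ω, if h ω = c then μ ω else 0) =
    (∑ ω, if f ω = a ∧ h ω = c then μ ω else 0) *
      (∑ ω, if σ (g ω, h ω) = d ∧ h ω = c then μ ω else 0)
  rw [e1, e2, Finset.sum_mul, Finset.mul_sum]
  apply Finset.sum_congr rfl; intro b _
  split_ifs with hσ
  · exact hCI a b c
  · ring

/-- conditional independence kills the extra conditioning: `H(g | (f,h)) = H(g | h)` -/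
lemma condEnt_pair_eq (μ : Ω → ℝ) (hμ0 : ∀ ω, 0 ≤ μ ω) (f : Ω → A) (g : Ω → B) (h : Ω → C)
    (hCI : CondIndep μ f g h) :
    condEnt μ g (fun ω => (f ω, h ω)) = condEnt μ g h := by
  rw [condEnt_eq_sum_omega, condEnt_eq_sum_omega]
  apply Finset.sum_congr rfl; intro ω _
  rcases eq_or_lt_of_le (hμ0 ω) with h0 | h0
  · rw [← h0]; ring
  · congr 1
    have hCI' := hCI (f ω) (g ω) (h ω)
    set A1 : ℝ := ∑ ω', if f ω' = f ω ∧ h ω' = h ω then μ ω' else 0 with hA1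
    set B2 : ℝ := jointProb μ g h (g ω) (h ω) with hB2
    set A2 : ℝ := ∑ ω', if h ω' = h ω then μ ω' else 0 with hA2
    have eB1 : jointProb μ g (fun ω => (f ω, h ω)) (g ω) (f ω, h ω)
        = ∑ ω', if f ω' = f ω ∧ g ω' = g ω ∧ h ω' = h ω then μ ω' else 0 := by
      unfold jointProb
      apply Finset.sum_congr rfl; intro ω' _
      apply if_congr _ rfl rfl
      rw [Prod.mk.injEq]
      tauto
    have eN : (∑ ω', if (fun ω => (f ω, h ω)) ω' = (f ω, h ω) then μ ω' else 0) = A1 := by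
      apply Finset.sum_congr rfl; intro ω' _
      apply if_congr _ rfl rfl
      rw [Prod.mk.injEq]
    rw [eB1, eN]
    set B1 : ℝ := ∑ ω', if f ω' = f ω ∧ g ω' = g ω ∧ h ω' = h ω then μ ω' else 0 with hB1
    have hCIe : B1 * A2 = A1 * B2 := hCI'
    have pA1 : 0 < A1 := lt_of_lt_of_le h0 (le_sum_if hμ0 ⟨rfl, rfl⟩)
    have pB1 : 0 < B1 := lt_of_lt_of_le h0 (le_sum_if hμ0 ⟨rfl, rfl, rfl⟩)
    have pA2 : 0 < A2 := lt_of_lt_of_le h0 (le_sum_if hμ0 rfl)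
    have pB2 : 0 < B2 := lt_of_lt_of_le h0 (le_sum_if hμ0 ⟨rfl, rfl⟩)
    have hlog : Real.log B1 + Real.log A2 = Real.log A1 + Real.log B2 := by
      rw [← Real.log_mul pB1.ne' pA2.ne', ← Real.log_mul pA1.ne' pB2.ne', hCIe]
    rw [Real.log_div pA1.ne' pB1.ne', Real.log_div pA2.ne' pB2.ne']
    linarith
end Helpers

/-- Monotonicity of transfer entropy in the memory length: if for each `t` the control
`U_t` is conditionally independent of all other past variables `(X^{t-1}, U^{t-n-1})`
given `(X_t, U_{t-n}^{t-1})`, then for every `n' ≥ n`,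
`I_{0,n'}(X^T → U^T) = ∑_t I(X_t; U_t | U_{t-n'}^{t-1})` is nonincreasing in `n'`:
`I_{0,n'}(X^T → U^T) ≥ I_{0,n'+1}(X^T → U^T)`. -/
theorem transferEntropy_monotone
    {T : ℕ} {𝒳 𝒰 : Type*} [Fintype 𝒳] [Fintype 𝒰] [DecidableEq 𝒳] [DecidableEq 𝒰]
    (n : ℕ)
    (μ : (Fin T → 𝒳) × (Fin T → 𝒰) → ℝ)
    (hμ0 : ∀ ω, 0 ≤ μ ω) (hμ1 : ∑ ω, μ ω = 1)
    (hpolicy : ∀ t : Fin T,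
      CondIndep μ
        (fun ω => ω.2 t)  -- U_t
        (fun ω => ((fun s : Fin T => if s.val < t.val then some (ω.1 s) else none),
                   (fun s : Fin T => if s.val + n < t.val then some (ω.2 s) else none)))
                          -- (X^{t-1}, U^{t-n-1})
        (fun ω => (ω.1 t, ctrlWindow n t ω.2)))  -- (X_t, U_{t-n}^{t-1})
    (n' : ℕ) (hn : n ≤ n') :
    ∑ t : Fin T, condMI μ (fun ω => ω.1 t) (fun ω => ω.2 t)
        (fun ω => ctrlWindow (n' + 1) t ω.2)
      ≤
    ∑ t : Fin T, condMI μ (fun ω => ω.1 t) (fun ω => ω.2 t)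
        (fun ω => ctrlWindow n' t ω.2) := by
  classical
  apply Finset.sum_le_sum
  intro t _
  -- step 1 : conditioning on the longer window gives smaller entropy of U_t
  have hstep1 : condEnt μ (fun ω : (Fin T → 𝒳) × (Fin T → 𝒰) => ω.2 t) (fun ω : (Fin T → 𝒳) × (Fin T → 𝒰) => ctrlWindow (n' + 1) t ω.2)
      ≤ condEnt μ (fun ω : (Fin T → 𝒳) × (Fin T → 𝒰) => ω.2 t) (fun ω : (Fin T → 𝒳) × (Fin T → 𝒰) => ctrlWindow n' t ω.2) := by
    set ψ : (Fin T → Option 𝒰) → (Fin T → Option 𝒰) :=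
      fun v s => if s.val < t.val ∧ t.val ≤ s.val + n' then v s else none with hψ
    have he : (fun ω : (Fin T → 𝒳) × (Fin T → 𝒰) => ψ (ctrlWindow (n' + 1) t ω.2))
        = fun ω : (Fin T → 𝒳) × (Fin T → 𝒰) => ctrlWindow n' t ω.2 := by
      funext ω
      funext s
      simp only [hψ, ctrlWindow]
      split_ifs <;> first | rfl | (exfalso; omega)
    have := condEnt_le_comp μ hμ0 (fun ω : (Fin T → 𝒳) × (Fin T → 𝒰) => ω.2 t)
      (fun ω : (Fin T → 𝒳) × (Fin T → 𝒰) => ctrlWindow (n' + 1) t ω.2) ψ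
    rwa [he] at this
  -- step 2 : the conditional entropy given (X_t, window m) is the same for all m ≥ n
  have hV : ∀ m : ℕ, n ≤ m →
      condEnt μ (fun ω : (Fin T → 𝒳) × (Fin T → 𝒰) => ω.2 t) (fun ω : (Fin T → 𝒳) × (Fin T → 𝒰) => (ω.1 t, ctrlWindow m t ω.2))
      = condEnt μ (fun ω : (Fin T → 𝒳) × (Fin T → 𝒰) => ω.2 t) (fun ω : (Fin T → 𝒳) × (Fin T → 𝒰) => (ω.1 t, ctrlWindow n t ω.2)) := by
    intro m hm
    set Z : (Fin T → 𝒳) × (Fin T → 𝒰) → 𝒳 × (Fin T → Option 𝒰) := fun ω => (ω.1 t, ctrlWindow n t ω.2) with hZ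
    set V : (Fin T → 𝒳) × (Fin T → 𝒰) → 𝒳 × (Fin T → Option 𝒰) := fun ω => (ω.1 t, ctrlWindow m t ω.2) with hVdef
    set Y : (Fin T → 𝒳) × (Fin T → 𝒰) → (Fin T → Option 𝒳) × (Fin T → Option 𝒰) :=
      fun ω => ((fun s : Fin T => if s.val < t.val then some (ω.1 s) else none),
                (fun s : Fin T => if s.val + n < t.val then some (ω.2 s) else none)) with hY
    set σ : ((Fin T → Option 𝒳) × (Fin T → Option 𝒰)) × (𝒳 × (Fin T → Option 𝒰))
        → 𝒳 × (Fin T → Option 𝒰) :=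
      fun p => (p.2.1, fun s => if s.val < t.val ∧ t.val ≤ s.val + m then
        (if t.val ≤ s.val + n then p.2.2 s else p.1.2 s) else none) with hσdef
    have hσ : (fun ω : (Fin T → 𝒳) × (Fin T → 𝒰) => σ (Y ω, Z ω)) = V := by
      funext ω
      apply Prod.ext
      · rfl
      · funext s
        simp only [hσdef, hY, hZ, hVdef, ctrlWindow]
        split_ifs <;> first | rfl | (exfalso; omega)
    have hCI1 : CondIndep μ (fun ω : (Fin T → 𝒳) × (Fin T → 𝒰) => ω.2 t) (fun ω : (Fin T → 𝒳) × (Fin T → 𝒰) => σ (Y ω, Z ω)) Z :=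
      CondIndep.comp_right (hpolicy t) σ
    rw [hσ] at hCI1
    have hCI2 : CondIndep μ V (fun ω : (Fin T → 𝒳) × (Fin T → 𝒰) => ω.2 t) Z := hCI1.symm'
    -- Z is a function of V
    have hτ : ∀ ω : (Fin T → 𝒳) × (Fin T → 𝒰), (fun v : 𝒳 × (Fin T → Option 𝒰) =>
        ((v.1, fun s => if s.val < t.val ∧ t.val ≤ s.val + n then v.2 s else none) :
          𝒳 × (Fin T → Option 𝒰))) (V ω) = Z ω := by
      intro ω
      apply Prod.ext
      · rfl
      · funext s
        simp only [hVdef, hZ, ctrlWindow]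
        split_ifs <;> first | rfl | (exfalso; omega)
    have hpart : ∀ ω₁ ω₂ : (Fin T → 𝒳) × (Fin T → 𝒰), V ω₁ = V ω₂ ↔ (V ω₁, Z ω₁) = (V ω₂, Z ω₂) := by
      intro ω₁ ω₂
      constructor
      · intro hv
        rw [Prod.mk.injEq]
        exact ⟨hv, by rw [← hτ ω₁, ← hτ ω₂, hv]⟩
      · intro hp
        exact congrArg Prod.fst hp
    calc condEnt μ (fun ω : (Fin T → 𝒳) × (Fin T → 𝒰) => ω.2 t) V
        = condEnt μ (fun ω : (Fin T → 𝒳) × (Fin T → 𝒰) => ω.2 t) (fun ω => (V ω, Z ω)) :=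
          condEnt_congr μ _ V _ hpart
      _ = condEnt μ (fun ω : (Fin T → 𝒳) × (Fin T → 𝒰) => ω.2 t) Z :=
          condEnt_pair_eq μ hμ0 V (fun ω : (Fin T → 𝒳) × (Fin T → 𝒰) => ω.2 t) Z hCI2
  show condEnt μ (fun ω : (Fin T → 𝒳) × (Fin T → 𝒰) => ω.2 t) (fun ω : (Fin T → 𝒳) × (Fin T → 𝒰) => ctrlWindow (n' + 1) t ω.2)
      - condEnt μ (fun ω : (Fin T → 𝒳) × (Fin T → 𝒰) => ω.2 t) (fun ω : (Fin T → 𝒳) × (Fin T → 𝒰) => (ω.1 t, ctrlWindow (n' + 1) t ω.2))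
      ≤ condEnt μ (fun ω : (Fin T → 𝒳) × (Fin T → 𝒰) => ω.2 t) (fun ω : (Fin T → 𝒳) × (Fin T → 𝒰) => ctrlWindow n' t ω.2)
      - condEnt μ (fun ω : (Fin T → 𝒳) × (Fin T → 𝒰) => ω.2 t) (fun ω : (Fin T → 𝒳) × (Fin T → 𝒰) => (ω.1 t, ctrlWindow n' t ω.2))
  rw [hV (n' + 1) (by omega), hV n' hn]
  linarith [hstep1]
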